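/- For every τ ∈ ℝ^ℓ, the Hessian matrix ( ∂²K_λ/∂τ_i∂τ_j )(τ) is positive definite if and only if l_j − L_j(τ) > 0 for every j = 1, …, ℓ. -/

import Mathlib

open Real Finset

noncomputable section

/-- `K(t) = log(1 + e^{2t})`. -/
def Kfun (t : ℝ) : ℝ := Real.log (1 + Real.exp (2 * t))

/-- `𝒥(t) = e^{2t}/(1 + e^{2t})`. -/
def Jfun (t : ℝ) : ℝ := Real.exp (2 * t) / (1 + Real.exp (2 * t))

/-- The coordinate change `Φ(σ)_i = σ_i + (1/2)·Σ_{j>i} c_{ji} K(σ_j)`. -/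
def Phi {ℓ : ℕ} (c : Fin ℓ → Fin ℓ → ℤ) (σ : Fin ℓ → ℝ) : Fin ℓ → ℝ :=
  fun i => σ i + (1 / 2) * ∑ j ∈ Finset.univ.filter (fun j => i < j), (c j i : ℝ) * Kfun (σ j)

/-- The inverse of the coordinate change `Φ`. -/
def PhiInv {ℓ : ℕ} (c : Fin ℓ → Fin ℓ → ℤ) : (Fin ℓ → ℝ) → (Fin ℓ → ℝ) :=
  Function.invFun (Phi c)

/-- The Kähler potential `K_λ(τ) = Σ_i l_i K(τ̃_i)`, where `τ̃ = Φ⁻¹(τ)`. -/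
def Klam {ℓ : ℕ} (l : Fin ℓ → ℤ) (c : Fin ℓ → Fin ℓ → ℤ) (τ : Fin ℓ → ℝ) : ℝ :=
  ∑ i, (l i : ℝ) * Kfun (PhiInv c τ i)

/-- The action variables `J_j(τ) = (1/2)·∂K_λ/∂τ_j`. -/
def Jact {ℓ : ℕ} (l : Fin ℓ → ℤ) (c : Fin ℓ → Fin ℓ → ℤ) (j : Fin ℓ) (τ : Fin ℓ → ℝ) : ℝ :=
  (1 / 2) * fderiv ℝ (Klam l c) τ (Pi.single j 1)

/-- `L_j(τ) = Σ_{i<j} c_{ji} J_i(τ)`. -/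
def Lfun {ℓ : ℕ} (l : Fin ℓ → ℤ) (c : Fin ℓ → Fin ℓ → ℤ) (j : Fin ℓ) (τ : Fin ℓ → ℝ) : ℝ :=
  ∑ i ∈ Finset.univ.filter (fun i => i < j), (c j i : ℝ) * Jact l c i τ

/-! ### Auxiliary machinery -/

open Matrix

/-- Explicit inverse of `Phi`, by downward recursion. -/
def Psi {ℓ : ℕ} (c : Fin ℓ → Fin ℓ → ℤ) (τ : Fin ℓ → ℝ) (i : Fin ℓ) : ℝ :=
  τ i - (1 / 2) * ∑ j ∈ (Finset.univ.filter (fun j => i < j)).attach,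
      (c j.1 i : ℝ) * Kfun (Psi c τ j.1)
termination_by ℓ - i.1
decreasing_by
  exact Nat.sub_lt_sub_left i.isLt (Finset.mem_filter.mp j.2).2

lemma Psi_def {ℓ : ℕ} (c : Fin ℓ → Fin ℓ → ℤ) (τ : Fin ℓ → ℝ) (i : Fin ℓ) :
    Psi c τ i = τ i - (1 / 2) * ∑ j ∈ Finset.univ.filter (fun j => i < j),
      (c j i : ℝ) * Kfun (Psi c τ j) := by
  rw [Psi, ← Finset.sum_attach (Finset.univ.filter (fun j => i < j))
    (fun j => (c j i : ℝ) * Kfun (Psi c τ j))]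

lemma Phi_Psi {ℓ : ℕ} (c : Fin ℓ → Fin ℓ → ℤ) (τ : Fin ℓ → ℝ) :
    Phi c (Psi c τ) = τ := by
  funext i
  rw [Phi, Psi_def]
  ring

lemma Psi_Phi {ℓ : ℕ} (c : Fin ℓ → Fin ℓ → ℤ) (σ : Fin ℓ → ℝ) :
    Psi c (Phi c σ) = σ := by
  have key : ∀ n : ℕ, ∀ i : Fin ℓ, ℓ - i.1 ≤ n → Psi c (Phi c σ) i = σ i := by
    intro n
    induction n with
    | zero => intro i hi; omega
    | succ n ih =>
      intro i hi
      rw [Psi_def, Phi]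
      have : ∀ j ∈ Finset.univ.filter (fun j => i < j),
          (c j i : ℝ) * Kfun (Psi c (Phi c σ) j) = (c j i : ℝ) * Kfun (σ j) := by
        intro j hj
        have hij := (Finset.mem_filter.mp hj).2
        rw [ih j (by omega)]
      rw [Finset.sum_congr rfl this]
      ring
  funext i
  exact key ℓ i (by omega)

lemma PhiInv_eq_Psi {ℓ : ℕ} (c : Fin ℓ → Fin ℓ → ℤ) (τ : Fin ℓ → ℝ) :
    PhiInv c τ = Psi c τ := by
  have hinj : Function.Injective (Phi c) :=
    Function.LeftInverse.injective (g := Psi c) (fun σ => Psi_Phi c σ)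
  apply hinj
  rw [Phi_Psi]
  exact Function.invFun_eq ⟨Psi c τ, Phi_Psi c τ⟩

lemma one_add_exp_pos (t : ℝ) : 0 < 1 + Real.exp (2 * t) := by positivity

lemma Jfun_pos (t : ℝ) : 0 < Jfun t := by
  unfold Jfun; positivity

lemma Jfun_lt_one (t : ℝ) : Jfun t < 1 := by
  unfold Jfun
  rw [div_lt_one (one_add_exp_pos t)]
  linarith

lemma hasDerivAt_Kfun (t : ℝ) : HasDerivAt Kfun (2 * Jfun t) t := by
  have h1 : HasDerivAt (fun t : ℝ => 2 * t) 2 t := by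
    simpa using (hasDerivAt_id t).const_mul 2
  have h4 := (h1.exp.const_add 1).log (ne_of_gt (one_add_exp_pos t))
  refine h4.congr_deriv ?_
  unfold Jfun
  field_simp

lemma hasDerivAt_Jfun (t : ℝ) : HasDerivAt Jfun (2 * Jfun t * (1 - Jfun t)) t := by
  have h1 : HasDerivAt (fun t : ℝ => 2 * t) 2 t := by
    simpa using (hasDerivAt_id t).const_mul 2
  have h2 := h1.exp
  have h4 := h2.div (h2.const_add 1) (ne_of_gt (one_add_exp_pos t))
  refine h4.congr_deriv ?_
  unfold Jfun
  have h5 := one_add_exp_pos t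
  field_simp

/-- Derivative of `τ ↦ Psi c τ i`. -/
def Dpsi {ℓ : ℕ} (c : Fin ℓ → Fin ℓ → ℤ) (τ : Fin ℓ → ℝ) (i : Fin ℓ) :
    (Fin ℓ → ℝ) →L[ℝ] ℝ :=
  ContinuousLinearMap.proj i - ∑ j ∈ (Finset.univ.filter (fun j => i < j)).attach,
      ((c j.1 i : ℝ) * Jfun (Psi c τ j.1)) • Dpsi c τ j.1
termination_by ℓ - i.1
decreasing_by
  exact Nat.sub_lt_sub_left i.isLt (Finset.mem_filter.mp j.2).2

lemma Dpsi_def {ℓ : ℕ} (c : Fin ℓ → Fin ℓ → ℤ) (τ : Fin ℓ → ℝ) (i : Fin ℓ) :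
    Dpsi c τ i = ContinuousLinearMap.proj i -
      ∑ j ∈ Finset.univ.filter (fun j => i < j),
        ((c j i : ℝ) * Jfun (Psi c τ j)) • Dpsi c τ j := by
  rw [Dpsi, ← Finset.sum_attach (Finset.univ.filter (fun j => i < j))
    (fun j => ((c j i : ℝ) * Jfun (Psi c τ j)) • Dpsi c τ j)]

lemma hasFDerivAt_Psi {ℓ : ℕ} (c : Fin ℓ → Fin ℓ → ℤ) (τ : Fin ℓ → ℝ) (i : Fin ℓ) :
    HasFDerivAt (fun τ => Psi c τ i) (Dpsi c τ i) τ := by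
  have key : ∀ n : ℕ, ∀ i : Fin ℓ, ℓ - i.1 ≤ n → ∀ τ : Fin ℓ → ℝ,
      HasFDerivAt (fun τ => Psi c τ i) (Dpsi c τ i) τ := by
    intro n
    induction n with
    | zero => intro i hi; omega
    | succ n ih =>
      intro i hi τ
      have heq : (fun τ => Psi c τ i) = fun τ : Fin ℓ → ℝ =>
          τ i - (1 / 2) * ∑ j ∈ Finset.univ.filter (fun j => i < j),
            (c j i : ℝ) * Kfun (Psi c τ j) := by
        funext τ; exact Psi_def c τ i
      rw [heq, Dpsi_def]
      have hproj : HasFDerivAt (fun τ : Fin ℓ → ℝ => τ i)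
          (ContinuousLinearMap.proj i : (Fin ℓ → ℝ) →L[ℝ] ℝ) τ :=
        (ContinuousLinearMap.proj i : (Fin ℓ → ℝ) →L[ℝ] ℝ).hasFDerivAt
      have hsum : HasFDerivAt (fun τ : Fin ℓ → ℝ =>
          ∑ j ∈ Finset.univ.filter (fun j => i < j), (c j i : ℝ) * Kfun (Psi c τ j))
          (∑ j ∈ Finset.univ.filter (fun j => i < j),
            ((c j i : ℝ) * (2 * Jfun (Psi c τ j))) • Dpsi c τ j) τ := by
        apply HasFDerivAt.fun_sum
        intro j hj
        have hij := (Finset.mem_filter.mp hj).2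
        have hKj : HasFDerivAt (fun τ : Fin ℓ → ℝ => Kfun (Psi c τ j))
            ((2 * Jfun (Psi c τ j)) • Dpsi c τ j) τ :=
          by have := (hasDerivAt_Kfun (Psi c τ j)).comp_hasFDerivAt τ (ih j (by omega) τ); exact this
        simpa [smul_smul, mul_assoc] using hKj.const_mul ((c j i : ℝ))
      have := hproj.sub (hsum.const_mul (1/2 : ℝ))
      refine this.congr_fderiv ?_
      rw [Finset.smul_sum]
      congr 1
      apply Finset.sum_congr rfl
      intro j hj
      rw [smul_smul]
      congr 1
      ring
  exact key ℓ i (by omega) τ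

/-- The Jacobian matrix `∂τ/∂σ` of `Phi` at `σ = Psi c τ`. -/
def Amat {ℓ : ℕ} (c : Fin ℓ → Fin ℓ → ℤ) (τ : Fin ℓ → ℝ) : Matrix (Fin ℓ) (Fin ℓ) ℝ :=
  Matrix.of fun i k => (if i = k then 1 else 0) +
    (if i < k then (c k i : ℝ) * Jfun (Psi c τ k) else 0)

/-- The Jacobian matrix of `Psi`. -/
def Mmat {ℓ : ℕ} (c : Fin ℓ → Fin ℓ → ℤ) (τ : Fin ℓ → ℝ) : Matrix (Fin ℓ) (Fin ℓ) ℝ :=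
  Matrix.of fun i j => Dpsi c τ i (Pi.single j 1)

lemma Mmat_def {ℓ : ℕ} (c : Fin ℓ → Fin ℓ → ℤ) (τ : Fin ℓ → ℝ) (i j : Fin ℓ) :
    Mmat c τ i j = (if i = j then 1 else 0) -
      ∑ k ∈ Finset.univ.filter (fun k => i < k),
        (c k i : ℝ) * Jfun (Psi c τ k) * Mmat c τ k j := by
  show Dpsi c τ i (Pi.single j 1) = _
  rw [Dpsi_def]
  simp [ContinuousLinearMap.sub_apply, ContinuousLinearMap.sum_apply,
    ContinuousLinearMap.smul_apply, Mmat, Pi.single_apply, smul_eq_mul, mul_assoc]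

lemma Amat_mul_Mmat {ℓ : ℕ} (c : Fin ℓ → Fin ℓ → ℤ) (τ : Fin ℓ → ℝ) :
    Amat c τ * Mmat c τ = 1 := by
  ext i j
  rw [Matrix.mul_apply]
  simp only [Amat, Matrix.of_apply, add_mul, ite_mul, one_mul, zero_mul]
  rw [Finset.sum_add_distrib, Finset.sum_ite_eq (Finset.univ) i (fun k => Mmat c τ k j),
    ← Finset.sum_filter]
  simp only [Finset.mem_univ, if_true]
  rw [Mmat_def c τ i j]
  simp [Matrix.one_apply, mul_assoc]

lemma Mmat_mul_Amat {ℓ : ℕ} (c : Fin ℓ → Fin ℓ → ℤ) (τ : Fin ℓ → ℝ) :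
    Mmat c τ * Amat c τ = 1 :=
  mul_eq_one_comm.mp (Amat_mul_Mmat c τ)

/-- Explicit form of the action variables, by upward recursion. -/
def Ja {ℓ : ℕ} (l : Fin ℓ → ℤ) (c : Fin ℓ → Fin ℓ → ℤ) (τ : Fin ℓ → ℝ) (j : Fin ℓ) : ℝ :=
  ((l j : ℝ) - ∑ i ∈ (Finset.univ.filter (fun i => i < j)).attach,
      (c j i.1 : ℝ) * Ja l c τ i.1) * Jfun (Psi c τ j)
termination_by j.1
decreasing_by
  exact (Finset.mem_filter.mp i.2).2

/-- `a_j = l_j − L_j` in explicit form. -/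
def avar {ℓ : ℕ} (l : Fin ℓ → ℤ) (c : Fin ℓ → Fin ℓ → ℤ) (τ : Fin ℓ → ℝ) (j : Fin ℓ) : ℝ :=
  (l j : ℝ) - ∑ i ∈ Finset.univ.filter (fun i => i < j), (c j i : ℝ) * Ja l c τ i

lemma Ja_def {ℓ : ℕ} (l : Fin ℓ → ℤ) (c : Fin ℓ → Fin ℓ → ℤ) (τ : Fin ℓ → ℝ) (j : Fin ℓ) :
    Ja l c τ j = avar l c τ j * Jfun (Psi c τ j) := by
  rw [Ja, avar, ← Finset.sum_attach (Finset.univ.filter (fun i => i < j))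
    (fun i => (c j i : ℝ) * Ja l c τ i)]

def wvec {ℓ : ℕ} (l : Fin ℓ → ℤ) (c : Fin ℓ → Fin ℓ → ℤ) (τ : Fin ℓ → ℝ) (j : Fin ℓ) : ℝ :=
  ∑ i, (l i : ℝ) * Jfun (Psi c τ i) * Mmat c τ i j

lemma wvec_rec {ℓ : ℕ} (l : Fin ℓ → ℤ) (c : Fin ℓ → Fin ℓ → ℤ) (τ : Fin ℓ → ℝ) (j : Fin ℓ) :
    wvec l c τ j + Jfun (Psi c τ j) * ∑ k ∈ Finset.univ.filter (fun k => k < j),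
      (c j k : ℝ) * wvec l c τ k = (l j : ℝ) * Jfun (Psi c τ j) := by
  have h := Mmat_mul_Amat c τ
  have key : ∀ i : Fin ℓ, ∑ k, Mmat c τ i k * Amat c τ k j = if i = j then 1 else 0 := by
    intro i
    have := congrArg (fun B => B i j) h
    simpa [Matrix.mul_apply, Matrix.one_apply] using this
  have lhs : ∑ i, (l i : ℝ) * Jfun (Psi c τ i) * (∑ k, Mmat c τ i k * Amat c τ k j)
      = (l j : ℝ) * Jfun (Psi c τ j) := by
    rw [Finset.sum_congr rfl (fun i _ => by rw [key i])]
    simp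
  rw [← lhs]
  have step1 : ∑ i, (l i : ℝ) * Jfun (Psi c τ i) * (∑ k, Mmat c τ i k * Amat c τ k j)
      = ∑ k, wvec l c τ k * Amat c τ k j := by
    simp only [Finset.mul_sum]
    rw [Finset.sum_comm]
    apply Finset.sum_congr rfl
    intro k _
    rw [wvec, Finset.sum_mul]
    apply Finset.sum_congr rfl
    intro i _
    ring
  rw [step1]
  have step2 : ∀ k : Fin ℓ, wvec l c τ k * Amat c τ k j =
      (if k = j then wvec l c τ k else 0) +
      (if k < j then wvec l c τ k * ((c j k : ℝ) * Jfun (Psi c τ j)) else 0) := by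
    intro k
    show wvec l c τ k * ((if k = j then 1 else 0) + _) = _
    split_ifs <;> ring
  rw [Finset.sum_congr rfl (fun k _ => step2 k), Finset.sum_add_distrib,
    Finset.sum_ite_eq' Finset.univ j (fun k => wvec l c τ k), ← Finset.sum_filter]
  simp only [Finset.mem_univ, if_true]
  rw [Finset.mul_sum]
  congr 1
  apply Finset.sum_congr rfl
  intro k _
  ring

lemma Ja_eq_wvec {ℓ : ℕ} (l : Fin ℓ → ℤ) (c : Fin ℓ → Fin ℓ → ℤ) (τ : Fin ℓ → ℝ) (j : Fin ℓ) :
    Ja l c τ j = wvec l c τ j := by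
  have key : ∀ n : ℕ, ∀ j : Fin ℓ, j.1 < n → Ja l c τ j = wvec l c τ j := by
    intro n
    induction n with
    | zero => intro j hj; omega
    | succ n ih =>
      intro j hj
      rw [Ja_def, avar]
      have hw := wvec_rec l c τ j
      have hcong : ∑ i ∈ Finset.univ.filter (fun i => i < j), (c j i : ℝ) * Ja l c τ i
          = ∑ i ∈ Finset.univ.filter (fun i => i < j), (c j i : ℝ) * wvec l c τ i := by
        apply Finset.sum_congr rfl
        intro i hi
        have hlt := (Finset.mem_filter.mp hi).2
        rw [ih i (by omega)]
      rw [hcong]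
      linarith [hw]
  exact key ℓ j j.isLt

/-! ### Derivative of the Kähler potential -/

lemma Klam_eq {ℓ : ℕ} (l : Fin ℓ → ℤ) (c : Fin ℓ → Fin ℓ → ℤ) :
    Klam l c = fun τ => ∑ i, (l i : ℝ) * Kfun (Psi c τ i) := by
  funext τ
  rw [Klam, PhiInv_eq_Psi]

lemma hasFDerivAt_Klam {ℓ : ℕ} (l : Fin ℓ → ℤ) (c : Fin ℓ → Fin ℓ → ℤ) (τ : Fin ℓ → ℝ) :
    HasFDerivAt (Klam l c)
      (∑ i, ((l i : ℝ) * (2 * Jfun (Psi c τ i))) • Dpsi c τ i) τ := by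
  rw [Klam_eq]
  apply HasFDerivAt.fun_sum
  intro i _
  have hKi : HasFDerivAt (fun τ : Fin ℓ → ℝ => Kfun (Psi c τ i))
      ((2 * Jfun (Psi c τ i)) • Dpsi c τ i) τ :=
    by have := (hasDerivAt_Kfun (Psi c τ i)).comp_hasFDerivAt τ (hasFDerivAt_Psi c τ i); exact this
  simpa [smul_smul, mul_assoc] using hKi.const_mul ((l i : ℝ))

lemma fderiv_Klam_single {ℓ : ℕ} (l : Fin ℓ → ℤ) (c : Fin ℓ → Fin ℓ → ℤ)
    (τ : Fin ℓ → ℝ) (j : Fin ℓ) :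
    fderiv ℝ (Klam l c) τ (Pi.single j 1) = 2 * Ja l c τ j := by
  rw [(hasFDerivAt_Klam l c τ).fderiv, Ja_eq_wvec, wvec]
  rw [ContinuousLinearMap.sum_apply, Finset.mul_sum]
  apply Finset.sum_congr rfl
  intro i _
  rw [ContinuousLinearMap.smul_apply]
  show ((l i : ℝ) * (2 * Jfun (Psi c τ i))) * Mmat c τ i j = _
  ring

lemma Jact_eq_Ja {ℓ : ℕ} (l : Fin ℓ → ℤ) (c : Fin ℓ → Fin ℓ → ℤ)
    (i : Fin ℓ) (τ : Fin ℓ → ℝ) : Jact l c i τ = Ja l c τ i := by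
  rw [Jact, fderiv_Klam_single]
  ring

lemma avar_eq {ℓ : ℕ} (l : Fin ℓ → ℤ) (c : Fin ℓ → Fin ℓ → ℤ)
    (τ : Fin ℓ → ℝ) (j : Fin ℓ) :
    avar l c τ j = (l j : ℝ) - Lfun l c j τ := by
  rw [avar, Lfun]
  congr 1
  apply Finset.sum_congr rfl
  intro i _
  rw [Jact_eq_Ja]

/-! ### Second derivatives -/

/-- Derivative of `τ ↦ Ja l c τ j`. -/
def DJa {ℓ : ℕ} (l : Fin ℓ → ℤ) (c : Fin ℓ → Fin ℓ → ℤ) (τ : Fin ℓ → ℝ) (j : Fin ℓ) :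
    (Fin ℓ → ℝ) →L[ℝ] ℝ :=
  (avar l c τ j * (2 * Jfun (Psi c τ j) * (1 - Jfun (Psi c τ j)))) • Dpsi c τ j
    + Jfun (Psi c τ j) •
      (-(∑ i ∈ (Finset.univ.filter (fun i => i < j)).attach,
          (c j i.1 : ℝ) • DJa l c τ i.1))
termination_by j.1
decreasing_by
  exact (Finset.mem_filter.mp i.2).2

lemma DJa_def {ℓ : ℕ} (l : Fin ℓ → ℤ) (c : Fin ℓ → Fin ℓ → ℤ) (τ : Fin ℓ → ℝ) (j : Fin ℓ) :
    DJa l c τ j =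
      (avar l c τ j * (2 * Jfun (Psi c τ j) * (1 - Jfun (Psi c τ j)))) • Dpsi c τ j
      + Jfun (Psi c τ j) •
        (-(∑ i ∈ Finset.univ.filter (fun i => i < j), (c j i : ℝ) • DJa l c τ i)) := by
  rw [DJa, ← Finset.sum_attach (Finset.univ.filter (fun i => i < j))
    (fun i => (c j i : ℝ) • DJa l c τ i)]

lemma hasFDerivAt_Ja {ℓ : ℕ} (l : Fin ℓ → ℤ) (c : Fin ℓ → Fin ℓ → ℤ)
    (τ : Fin ℓ → ℝ) (j : Fin ℓ) :
    HasFDerivAt (fun τ => Ja l c τ j) (DJa l c τ j) τ := by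
  have key : ∀ n : ℕ, ∀ j : Fin ℓ, j.1 < n → ∀ τ : Fin ℓ → ℝ,
      HasFDerivAt (fun τ => Ja l c τ j) (DJa l c τ j) τ := by
    intro n
    induction n with
    | zero => intro j hj; omega
    | succ n ih =>
      intro j hj τ
      have heq : (fun τ => Ja l c τ j) = fun τ : Fin ℓ → ℝ =>
          ((l j : ℝ) - ∑ i ∈ Finset.univ.filter (fun i => i < j), (c j i : ℝ) * Ja l c τ i)
            * Jfun (Psi c τ j) := by
        funext τ
        rw [Ja_def, avar]
      rw [heq]
      have hf : HasFDerivAt (fun τ : Fin ℓ → ℝ =>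
          (l j : ℝ) - ∑ i ∈ Finset.univ.filter (fun i => i < j), (c j i : ℝ) * Ja l c τ i)
          (-(∑ i ∈ Finset.univ.filter (fun i => i < j), (c j i : ℝ) • DJa l c τ i)) τ := by
        apply HasFDerivAt.const_sub
        apply HasFDerivAt.fun_sum
        intro i hi
        have hlt := (Finset.mem_filter.mp hi).2
        exact (ih i (by omega) τ).const_mul _
      have hg : HasFDerivAt (fun τ : Fin ℓ → ℝ => Jfun (Psi c τ j))
          ((2 * Jfun (Psi c τ j) * (1 - Jfun (Psi c τ j))) • Dpsi c τ j) τ :=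
        by have := (hasDerivAt_Jfun (Psi c τ j)).comp_hasFDerivAt τ (hasFDerivAt_Psi c τ j); exact this
      have hmul := hf.mul hg
      rw [DJa_def]
      refine hmul.congr_fderiv ?_
      rw [avar]
      module
  exact key ℓ j j.isLt τ

/-- The matrix of second derivatives (half of it). -/
def Pmat {ℓ : ℕ} (l : Fin ℓ → ℤ) (c : Fin ℓ → Fin ℓ → ℤ) (τ : Fin ℓ → ℝ) :
    Matrix (Fin ℓ) (Fin ℓ) ℝ :=
  Matrix.of fun i j => DJa l c τ j (Pi.single i 1)

/-- diagonal entries -/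
def dvec {ℓ : ℕ} (l : Fin ℓ → ℤ) (c : Fin ℓ → Fin ℓ → ℤ) (τ : Fin ℓ → ℝ) (j : Fin ℓ) : ℝ :=
  avar l c τ j * (2 * Jfun (Psi c τ j) * (1 - Jfun (Psi c τ j)))

lemma Pmat_def {ℓ : ℕ} (l : Fin ℓ → ℤ) (c : Fin ℓ → Fin ℓ → ℤ) (τ : Fin ℓ → ℝ)
    (i j : Fin ℓ) :
    Pmat l c τ i j = dvec l c τ j * Mmat c τ j i
      - Jfun (Psi c τ j) * ∑ k ∈ Finset.univ.filter (fun k => k < j),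
          (c j k : ℝ) * Pmat l c τ i k := by
  show DJa l c τ j (Pi.single i 1) = _
  rw [DJa_def]
  simp only [ContinuousLinearMap.add_apply, ContinuousLinearMap.smul_apply,
    ContinuousLinearMap.neg_apply, ContinuousLinearMap.sum_apply, smul_eq_mul]
  rw [Finset.mul_sum]
  show dvec l c τ j * Mmat c τ j i + _ = _
  rw [sub_eq_add_neg, ← Finset.mul_sum]
  rw [mul_neg]
  rfl

lemma Pmat_mul_Amat {ℓ : ℕ} (l : Fin ℓ → ℤ) (c : Fin ℓ → Fin ℓ → ℤ) (τ : Fin ℓ → ℝ) :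
    Pmat l c τ * Amat c τ = (Mmat c τ)ᵀ * Matrix.diagonal (dvec l c τ) := by
  ext i j
  rw [Matrix.mul_apply, Matrix.mul_diagonal, Matrix.transpose_apply]
  have step2 : ∀ k : Fin ℓ, Pmat l c τ i k * Amat c τ k j =
      (if k = j then Pmat l c τ i k else 0) +
      (if k < j then Pmat l c τ i k * ((c j k : ℝ) * Jfun (Psi c τ j)) else 0) := by
    intro k
    show Pmat l c τ i k * ((if k = j then 1 else 0) + _) = _
    split_ifs <;> ring
  rw [Finset.sum_congr rfl (fun k _ => step2 k), Finset.sum_add_distrib,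
    Finset.sum_ite_eq' Finset.univ j (fun k => Pmat l c τ i k), ← Finset.sum_filter]
  simp only [Finset.mem_univ, if_true]
  rw [Pmat_def l c τ i j]
  have : ∑ k ∈ Finset.univ.filter (fun k => k < j),
      Pmat l c τ i k * ((c j k : ℝ) * Jfun (Psi c τ j))
      = Jfun (Psi c τ j) * ∑ k ∈ Finset.univ.filter (fun k => k < j),
          (c j k : ℝ) * Pmat l c τ i k := by
    rw [Finset.mul_sum]
    apply Finset.sum_congr rfl
    intro k _
    ring
  rw [this]
  ring

lemma Pmat_eq {ℓ : ℕ} (l : Fin ℓ → ℤ) (c : Fin ℓ → Fin ℓ → ℤ) (τ : Fin ℓ → ℝ) :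
    Pmat l c τ = (Mmat c τ)ᵀ * Matrix.diagonal (dvec l c τ) * Mmat c τ := by
  calc Pmat l c τ = Pmat l c τ * (Amat c τ * Mmat c τ) := by
        rw [Amat_mul_Mmat, Matrix.mul_one]
    _ = (Pmat l c τ * Amat c τ) * Mmat c τ := by rw [Matrix.mul_assoc]
    _ = (Mmat c τ)ᵀ * Matrix.diagonal (dvec l c τ) * Mmat c τ := by
        rw [Pmat_mul_Amat]

/-! ### Positive definiteness transfer -/

lemma quad_form_eq {n : ℕ} (M D : Matrix (Fin n) (Fin n) ℝ) (x : Fin n → ℝ) :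
    x ⬝ᵥ ((Mᵀ * D * M) *ᵥ x) = (M *ᵥ x) ⬝ᵥ (D *ᵥ (M *ᵥ x)) := by
  rw [← Matrix.mulVec_mulVec, ← Matrix.mulVec_mulVec, Matrix.dotProduct_mulVec,
    Matrix.vecMul_transpose]

lemma conj_posDef {n : ℕ} (M A : Matrix (Fin n) (Fin n) ℝ)
    (h1 : M * A = 1) (h2 : A * M = 1) (d : Fin n → ℝ) :
    (Mᵀ * Matrix.diagonal d * M).PosDef ↔ ∀ j, 0 < d j := by
  constructor
  · intro hPD j
    set x := A *ᵥ Pi.single j 1 with hx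
    have hMx : M *ᵥ x = Pi.single j 1 := by
      rw [hx, Matrix.mulVec_mulVec, h1, Matrix.one_mulVec]
    have hxne : x ≠ 0 := by
      intro h0
      rw [h0, Matrix.mulVec_zero] at hMx
      have := congrFun hMx j
      simp at this
    have := hPD.dotProduct_mulVec_pos hxne
    rw [star_trivial, quad_form_eq, hMx] at this
    simpa [Matrix.mulVec_diagonal, Pi.single_apply] using this
  · intro hd
    refine Matrix.posDef_iff_dotProduct_mulVec.mpr ⟨?_, ?_⟩
    · have : (Matrix.diagonal d).IsHermitian := by
        rw [Matrix.IsHermitian, Matrix.conjTranspose_eq_transpose_of_trivial,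
          Matrix.diagonal_transpose]
      have h3 := Matrix.isHermitian_conjTranspose_mul_mul M this
      simpa [Matrix.conjTranspose_eq_transpose_of_trivial, Matrix.mul_assoc] using h3
    · intro x hx
      rw [star_trivial, quad_form_eq]
      set y := M *ᵥ x with hy
      have hyne : y ≠ 0 := by
        intro h0
        have : A *ᵥ y = x := by rw [hy, Matrix.mulVec_mulVec, h2, Matrix.one_mulVec]
        rw [h0, Matrix.mulVec_zero] at this
        exact hx this.symm
      obtain ⟨i, hi⟩ := Function.ne_iff.mp hyne
      rw [dotProduct]
      apply Finset.sum_pos'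
      · intro k _
        rw [Matrix.mulVec_diagonal]
        have : y k * (d k * y k) = d k * (y k * y k) := by ring
        rw [this]
        exact mul_nonneg (hd k).le (mul_self_nonneg _)
      · refine ⟨i, Finset.mem_univ i, ?_⟩
        rw [Matrix.mulVec_diagonal]
        have : y i * (d i * y i) = d i * (y i * y i) := by ring
        rw [this]
        exact mul_pos (hd i) (mul_self_pos.mpr (by simpa using hi))

/-! ### Main theorem -/

lemma hessian_eq {ℓ : ℕ} (l : Fin ℓ → ℤ) (c : Fin ℓ → Fin ℓ → ℤ) (τ : Fin ℓ → ℝ) :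
    (Matrix.of fun i j : Fin ℓ =>
        fderiv ℝ (fun σ => fderiv ℝ (Klam l c) σ (Pi.single j 1)) τ
          (Pi.single i 1))
      = (Mmat c τ)ᵀ * Matrix.diagonal (fun j => 2 * dvec l c τ j) * Mmat c τ := by
  have hP : ∀ i j : Fin ℓ,
      fderiv ℝ (fun σ => fderiv ℝ (Klam l c) σ (Pi.single j 1)) τ (Pi.single i 1)
        = 2 * Pmat l c τ i j := by
    intro i j
    have heq : (fun σ : Fin ℓ → ℝ => fderiv ℝ (Klam l c) σ (Pi.single j 1))
        = fun σ => 2 * Ja l c σ j := by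
      funext σ
      exact fderiv_Klam_single l c σ j
    rw [heq]
    have h2 : HasFDerivAt (fun σ : Fin ℓ → ℝ => 2 * Ja l c σ j)
        ((2 : ℝ) • DJa l c τ j) τ := by
      simpa using (hasFDerivAt_Ja l c τ j).const_mul (2 : ℝ)
    rw [h2.fderiv]
    simp [Pmat, smul_eq_mul]
  have hdiag : Matrix.diagonal (fun j => 2 * dvec l c τ j)
      = (2 : ℝ) • Matrix.diagonal (dvec l c τ) := by
    rw [← Matrix.diagonal_smul]
    congr 1
  ext i j
  rw [Matrix.of_apply, hP i j, Pmat_eq, hdiag, Matrix.mul_smul, Matrix.smul_mul,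
    Matrix.smul_apply, smul_eq_mul]

/-- Pointwise positivity criterion (Theorem 6.1): the Hessian of the Kähler
potential `K_λ` at `τ` is positive definite iff `l_j − L_j(τ) > 0` for all `j`. -/
theorem hessian_posDef_iff {ℓ : ℕ} (l : Fin ℓ → ℤ) (c : Fin ℓ → Fin ℓ → ℤ)
    (τ : Fin ℓ → ℝ) :
    (Matrix.of fun i j : Fin ℓ =>
        fderiv ℝ (fun σ => fderiv ℝ (Klam l c) σ (Pi.single j 1)) τ
          (Pi.single i 1)).PosDef ↔
      ∀ j : Fin ℓ, 0 < (l j : ℝ) - Lfun l c j τ := by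
  rw [hessian_eq]
  rw [conj_posDef (Mmat c τ) (Amat c τ) (Mmat_mul_Amat c τ) (Amat_mul_Mmat c τ)]
  apply forall_congr'
  intro j
  rw [← avar_eq]
  unfold dvec
  have hu := Jfun_pos (Psi c τ j)
  have hu1 := Jfun_lt_one (Psi c τ j)
  constructor
  · intro h
    by_contra hne
    push_neg at hne
    nlinarith [mul_nonneg (mul_nonneg hu.le (sub_pos.mpr hu1).le) (neg_nonneg.mpr hne)]
  · intro h
    nlinarith [mul_pos (mul_pos h hu) (sub_pos.mpr hu1)]
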